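/- The Driscoll–Healy quadrature weights b_j = sin((2j+1)π/(4L)) · (2/L) · ∑_{l=0}^{L-1} (1/(2l+1)) · sin((2j+1)(2l+1)π/(4L)) are strictly positive for all j in {0,...,2L-1} and every positive integer L. -/

import Mathlib

open Real Finset

/-- Abel summation lower bound for the telescoping cosine sum. -/
lemma abel_bound (x : ℝ) : ∀ n : ℕ, 2 ≤ n →
    (1 - Real.cos (2 * (n:ℝ) * x)) / (2 * (n:ℝ) - 1) + (2/3) * (1 - Real.cos (2 * x))
      ≤ ∑ l ∈ Finset.range n,
        (Real.cos (2 * (l:ℝ) * x) - Real.cos (2 * ((l:ℝ) + 1) * x)) / (2 * (l:ℝ) + 1) := by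
  intro n hn
  induction n, hn using Nat.le_induction with
  | base =>
      rw [Finset.sum_range_succ, Finset.sum_range_succ, Finset.sum_range_zero]
      norm_num
      have h4 : (2:ℝ) * (1 + 1) * x = 2 * (2 * x) := by ring
      ring_nf
      nlinarith [Real.cos_le_one (2*x)]
  | succ n hn ih =>
      rw [Finset.sum_range_succ]
      have hd : (0:ℝ) < 2 * (n:ℝ) - 1 := by
        have : (2:ℝ) ≤ (n:ℝ) := by exact_mod_cast hn
        linarith
      have hd' : (0:ℝ) < 2 * (n:ℝ) + 1 := by linarith
      have hc : Real.cos (2 * (n:ℝ) * x) ≤ 1 := Real.cos_le_one _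
      have h1 : (1 - Real.cos (2 * (n:ℝ) * x)) / (2 * (n:ℝ) + 1)
          ≤ (1 - Real.cos (2 * (n:ℝ) * x)) / (2 * (n:ℝ) - 1) :=
        div_le_div_of_nonneg_left (by linarith) hd (by linarith)
      have key : (1 - Real.cos (2 * ((n:ℝ)+1) * x)) / (2 * ((n:ℝ)+1) - 1)
          ≤ (1 - Real.cos (2 * (n:ℝ) * x)) / (2 * (n:ℝ) - 1)
            + (Real.cos (2 * (n:ℝ) * x) - Real.cos (2 * ((n:ℝ) + 1) * x)) / (2 * (n:ℝ) + 1) := by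
        have e : (1 - Real.cos (2 * ((n:ℝ)+1) * x)) / (2 * ((n:ℝ)+1) - 1)
            = (1 - Real.cos (2 * (n:ℝ) * x)) / (2 * (n:ℝ) + 1)
              + (Real.cos (2 * (n:ℝ) * x) - Real.cos (2 * ((n:ℝ) + 1) * x)) / (2 * (n:ℝ) + 1) := by
          rw [← add_div]
          ring_nf
        rw [e]
        linarith
      push_cast
      linarith

/-- Fejér–Jackson-type positivity. -/
lemma fejer (x : ℝ) (hx0 : 0 < x) (hxpi : x < Real.pi) (n : ℕ) (hn : 1 ≤ n) :
    0 < ∑ l ∈ Finset.range n, (1 / (2 * (l:ℝ) + 1)) * Real.sin ((2 * (l:ℝ) + 1) * x) := by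
  have hs : 0 < Real.sin x := Real.sin_pos_of_pos_of_lt_pi hx0 hxpi
  rcases eq_or_lt_of_le hn with h1 | h2
  · rw [← h1]
    simp [Finset.sum_range_one]
    nlinarith
  · -- n ≥ 2
    have hn2 : 2 ≤ n := h2
    have hcos : Real.cos (2 * x) < 1 := by
      have := Real.cos_two_mul x
      have := Real.sin_sq_add_cos_sq x
      nlinarith
    set T := ∑ l ∈ Finset.range n, (1 / (2 * (l:ℝ) + 1)) * Real.sin ((2 * (l:ℝ) + 1) * x) with hT
    have hmul : 2 * Real.sin x * T = ∑ l ∈ Finset.range n,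
        (Real.cos (2 * (l:ℝ) * x) - Real.cos (2 * ((l:ℝ) + 1) * x)) / (2 * (l:ℝ) + 1) := by
      rw [hT, Finset.mul_sum]
      refine Finset.sum_congr rfl fun l _ => ?_
      have hident : Real.cos (2 * (l:ℝ) * x) - Real.cos (2 * ((l:ℝ) + 1) * x)
          = 2 * Real.sin ((2 * (l:ℝ) + 1) * x) * Real.sin x := by
        rw [Real.cos_sub_cos]
        have e1 : (2 * (l:ℝ) * x + 2 * ((l:ℝ) + 1) * x) / 2 = (2 * (l:ℝ) + 1) * x := by ring
        have e2 : (2 * (l:ℝ) * x - 2 * ((l:ℝ) + 1) * x) / 2 = -x := by ring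
        rw [e1, e2, Real.sin_neg]
        ring
      rw [hident]
      ring
    have habel := abel_bound x n hn2
    have hdpos : (0:ℝ) < 2 * (n:ℝ) - 1 := by
      have : (2:ℝ) ≤ (n:ℝ) := by exact_mod_cast hn2
      linarith
    have hc1 : Real.cos (2 * (n:ℝ) * x) ≤ 1 := Real.cos_le_one _
    have hA : 0 < 2 * Real.sin x * T := by
      rw [hmul]
      have h1 : 0 ≤ (1 - Real.cos (2 * (n:ℝ) * x)) / (2 * (n:ℝ) - 1) :=
        div_nonneg (by linarith) (le_of_lt hdpos)
      have h2 : 0 < (2/3 : ℝ) * (1 - Real.cos (2 * x)) := by nlinarith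
      linarith
    nlinarith


/-- The Driscoll–Healy quadrature weight `b_j` of order `L`. -/
noncomputable def dhWeight (L j : ℕ) : ℝ :=
  Real.sin ((2 * (j : ℝ) + 1) * Real.pi / (4 * (L : ℝ))) * (2 / (L : ℝ)) *
    ∑ l ∈ Finset.range L, (1 / (2 * (l : ℝ) + 1)) *
      Real.sin ((2 * (j : ℝ) + 1) * (2 * (l : ℝ) + 1) * Real.pi / (4 * (L : ℝ)))

theorem dhWeight_pos (L : ℕ) (hL : 1 ≤ L) (j : ℕ) (hj : j < 2 * L) :
    0 < dhWeight L j := by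
  have hLpos : (0:ℝ) < (L:ℝ) := by exact_mod_cast hL
  set x : ℝ := (2 * (j:ℝ) + 1) * Real.pi / (4 * (L:ℝ)) with hx
  have hx0 : 0 < x := by
    apply div_pos
    · positivity
    · positivity
  have hxpi : x < Real.pi := by
    rw [hx, div_lt_iff₀ (by positivity)]
    have hjL : (2 * (j:ℝ) + 1) < 4 * (L:ℝ) := by
      have : (j:ℝ) + 1 ≤ 2 * (L:ℝ) := by exact_mod_cast hj
      linarith
    nlinarith [Real.pi_pos]
  have hsum : ∑ l ∈ Finset.range L, (1 / (2 * (l:ℝ) + 1)) *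
      Real.sin ((2 * (j:ℝ) + 1) * (2 * (l:ℝ) + 1) * Real.pi / (4 * (L:ℝ)))
      = ∑ l ∈ Finset.range L, (1 / (2 * (l:ℝ) + 1)) * Real.sin ((2 * (l:ℝ) + 1) * x) := by
    refine Finset.sum_congr rfl fun l _ => ?_
    congr 1
    rw [hx]
    ring
  unfold dhWeight
  rw [hsum]
  have hT := fejer x hx0 hxpi L hL
  have hs : 0 < Real.sin x := Real.sin_pos_of_pos_of_lt_pi hx0 hxpi
  have h2L : 0 < 2 / (L:ℝ) := by positivity
  exact mul_pos (mul_pos hs h2L) hT
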